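/- Let (Ω, μ) be a measure space with μ(Ω) < ∞, let E be a real normed vector space, let p > 1 and L ≥ 0 be real numbers, and let W : E → ℝ be a function satisfying |W(ξ_1) − W(ξ_2)| ≤ L (1 + ‖ξ_1‖^{p−1} + ‖ξ_2‖^{p−1}) ‖ξ_1 − ξ_2‖ for all ξ_1, ξ_2 ∈ E. Let f and (f_n)_{n∈ℕ} be strongly measurable functions from Ω to E with ∫_Ω ‖f‖^p dμ < ∞ and ∫_Ω ‖f_n‖^p dμ < ∞ for all n, and suppose that ∫_Ω ‖f_n − f‖^p dμ → 0 as n → ∞. Then ∫_Ω W(f_n) dμ → ∫_Ω W(f) dμ as n → ∞. -/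

import Mathlib

open MeasureTheory Filter

private lemma aux_rpow_add_le {a b q : ℝ} (ha : 0 ≤ a) (hb : 0 ≤ b) (hq : 0 ≤ q) :
    (a + b) ^ q ≤ 2 ^ q * (a ^ q + b ^ q) := by
  have hmax : 0 ≤ max a b := le_max_of_le_left ha
  have h1 : a + b ≤ 2 * max a b := by
    rcases max_cases a b with ⟨h, hba⟩ | ⟨h, hba⟩ <;> rw [h] <;> linarith
  calc (a + b) ^ q ≤ (2 * max a b) ^ q := Real.rpow_le_rpow (by linarith) h1 hq
    _ = 2 ^ q * (max a b) ^ q := Real.mul_rpow (by norm_num) hmax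
    _ ≤ 2 ^ q * (a ^ q + b ^ q) := by
        apply mul_le_mul_of_nonneg_left _ (Real.rpow_nonneg (by norm_num) q)
        rcases max_cases a b with ⟨h, _⟩ | ⟨h, _⟩ <;> rw [h]
        · nlinarith [Real.rpow_nonneg hb q]
        · nlinarith [Real.rpow_nonneg ha q]

private lemma aux_memLp_iff {Ω : Type*} [MeasurableSpace Ω] {μ : Measure Ω}
    {E : Type*} [NormedAddCommGroup E] {p : ℝ} (hp : 0 < p) {f : Ω → E}
    (hf : AEStronglyMeasurable f μ) :
    MemLp f (ENNReal.ofReal p) μ ↔ Integrable (fun ω => ‖f ω‖ ^ p) μ := by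
  have h0 : ENNReal.ofReal p ≠ 0 := by
    simp only [ne_eq, ENNReal.ofReal_eq_zero, not_le]; exact hp
  have key := memLp_norm_rpow_iff (q := ENNReal.ofReal p) (p := ENNReal.ofReal p) hf h0
    ENNReal.ofReal_ne_top
  rw [ENNReal.div_self h0 ENNReal.ofReal_ne_top, ENNReal.toReal_ofReal hp.le,
    memLp_one_iff_integrable] at key
  exact key.symm

/-- Continuity of the integral functional `u ↦ ∫ W(u)` with respect to strong `L^p`
convergence, under the growth-continuity assumption on `W`. -/
theorem stmt_7 (Ω : Type*) [MeasurableSpace Ω] (μ : Measure Ω) [IsFiniteMeasure μ]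
    (E : Type*) [NormedAddCommGroup E] [NormedSpace ℝ E]
    (p L : ℝ) (hp : 1 < p) (hL : 0 ≤ L) (W : E → ℝ)
    (hW : ∀ ξ₁ ξ₂ : E, |W ξ₁ - W ξ₂| ≤ L * (1 + ‖ξ₁‖ ^ (p - 1) + ‖ξ₂‖ ^ (p - 1)) * ‖ξ₁ - ξ₂‖)
    (f : Ω → E) (fn : ℕ → Ω → E)
    (hf : StronglyMeasurable f) (hfn : ∀ n, StronglyMeasurable (fn n))
    (hfp : Integrable (fun ω => ‖f ω‖ ^ p) μ)
    (hfnp : ∀ n, Integrable (fun ω => ‖fn n ω‖ ^ p) μ)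
    (hconv : Tendsto (fun n => ∫ ω, ‖fn n ω - f ω‖ ^ p ∂μ) atTop (nhds 0)) :
    Tendsto (fun n => ∫ ω, W (fn n ω) ∂μ) atTop (nhds (∫ ω, W (f ω) ∂μ)) := by
  set q : ℝ := p / (p - 1) with hq_def
  have hpq : p.HolderConjugate q := Real.HolderConjugate.conjExponent hp
  have hp0 : (0:ℝ) < p := hpq.pos
  have hq0 : (0:ℝ) < q := hpq.symm.pos
  have hp1 : (0:ℝ) < p - 1 := by linarith
  -- continuity of W
  have hWcont : Continuous W := by
    rw [continuous_iff_continuousAt]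
    intro x
    have hc1 : Continuous fun ξ : E => ‖ξ‖ ^ (p - 1) :=
      continuous_norm.rpow_const (fun ξ => Or.inr hp1.le)
    have hb : Continuous fun ξ : E =>
        L * (1 + ‖ξ‖ ^ (p - 1) + ‖x‖ ^ (p - 1)) * ‖ξ - x‖ :=
      ((continuous_const.mul ((continuous_const.add hc1).add continuous_const)).mul
        ((continuous_id.sub continuous_const).norm))
    rw [ContinuousAt, tendsto_iff_dist_tendsto_zero]
    have hb0 : Tendsto (fun ξ : E => L * (1 + ‖ξ‖ ^ (p - 1) + ‖x‖ ^ (p - 1)) * ‖ξ - x‖)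
        (nhds x) (nhds 0) := by simpa using hb.tendsto x
    refine squeeze_zero (fun t => dist_nonneg) (fun t => ?_) hb0
    rw [Real.dist_eq]; exact hW t x
  -- integrability of W ∘ g
  have hWint : ∀ (g : Ω → E), StronglyMeasurable g → Integrable (fun ω => ‖g ω‖ ^ p) μ →
      Integrable (fun ω => W (g ω)) μ := by
    intro g hg hgp
    refine Integrable.mono' ((integrable_const (|W 0| + L)).add (hgp.const_mul (2 * L)))
      (hWcont.comp_stronglyMeasurable hg).aestronglyMeasurable (ae_of_all _ fun ω => ?_)
    have h1 := hW (g ω) 0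
    rw [norm_zero, Real.zero_rpow (by linarith : p - 1 ≠ 0), sub_zero, add_zero] at h1
    set x := ‖g ω‖ with hx_def
    have hx : 0 ≤ x := norm_nonneg _
    have hxp : x ^ (p - 1) * x = x ^ p := by
      have h2 := Real.rpow_add' hx (show p - 1 + 1 ≠ 0 by linarith)
      rw [sub_add_cancel, Real.rpow_one] at h2
      linarith
    have hx1 : x ≤ 1 + x ^ p := by
      rcases le_or_gt x 1 with h | h
      · have := Real.rpow_nonneg hx p; linarith
      · have : x ^ (1:ℝ) ≤ x ^ p := Real.rpow_le_rpow_of_exponent_le h.le (by linarith)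
        rw [Real.rpow_one] at this; linarith
    have habs : |W (g ω)| ≤ |W 0| + L * (1 + x ^ (p - 1)) * x := by
      have := abs_sub_abs_le_abs_sub (W (g ω)) (W 0)
      linarith [h1]
    rw [Real.norm_eq_abs]
    have hexp : L * (1 + x ^ (p - 1)) * x = L * x + L * x ^ p := by
      rw [mul_comm (L * (1 + x ^ (p - 1))) x]; rw [← hxp]; ring
    have hLx : L * x ≤ L * (1 + x ^ p) := mul_le_mul_of_nonneg_left hx1 hL
    simp only [Pi.add_apply]
    calc |W (g ω)| ≤ |W 0| + L * (1 + x ^ (p - 1)) * x := habs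
      _ = |W 0| + (L * x + L * x ^ p) := by rw [hexp]
      _ ≤ |W 0| + (L * (1 + x ^ p) + L * x ^ p) := by linarith
      _ = |W 0| + L + 2 * L * x ^ p := by ring
  -- MemLp facts
  have hfLp : MemLp f (ENNReal.ofReal p) μ :=
    (aux_memLp_iff hp0 hf.aestronglyMeasurable).2 hfp
  have hfnLp : ∀ n, MemLp (fn n) (ENNReal.ofReal p) μ := fun n =>
    (aux_memLp_iff hp0 (hfn n).aestronglyMeasurable).2 (hfnp n)
  have hsubLp : ∀ n, MemLp (fun ω => fn n ω - f ω) (ENNReal.ofReal p) μ := fun n =>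
    (hfnLp n).sub hfLp
  have hsubInt : ∀ n, Integrable (fun ω => ‖fn n ω - f ω‖ ^ p) μ := fun n =>
    (aux_memLp_iff hp0 (hsubLp n).1).1 (hsubLp n)
  have hrpowLp : ∀ (g : Ω → E), MemLp g (ENNReal.ofReal p) μ →
      MemLp (fun ω => ‖g ω‖ ^ (p - 1)) (ENNReal.ofReal q) μ := by
    intro g hg
    have h1 : ENNReal.ofReal (p - 1) ≠ 0 := by
      simp only [ne_eq, ENNReal.ofReal_eq_zero, not_le]; exact hp1
    have key := (memLp_norm_rpow_iff (q := ENNReal.ofReal (p - 1)) hg.1 h1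
      ENNReal.ofReal_ne_top).2 hg
    rwa [ENNReal.toReal_ofReal hp1.le, ← ENNReal.ofReal_div_of_pos hp1] at key
  have hGLp : ∀ n, MemLp (fun ω => 1 + ‖fn n ω‖ ^ (p - 1) + ‖f ω‖ ^ (p - 1))
      (ENNReal.ofReal q) μ := by
    intro n
    exact ((memLp_const (1:ℝ)).add (hrpowLp _ (hfnLp n))).add (hrpowLp _ hfLp)
  -- integrability of the product
  have hpqr : (1 : ENNReal) / 1 = 1 / ENNReal.ofReal p + 1 / ENNReal.ofReal q := by
    rw [one_div, one_div, one_div, ← ENNReal.ofReal_inv_of_pos hp0,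
      ← ENNReal.ofReal_inv_of_pos hq0,
      ← ENNReal.ofReal_add (by positivity) (by positivity),
      hpq.inv_add_inv_eq_one, ENNReal.ofReal_one, inv_one]
  have hGH : ∀ n, Integrable (fun ω =>
      ‖fn n ω - f ω‖ * (1 + ‖fn n ω‖ ^ (p - 1) + ‖f ω‖ ^ (p - 1))) μ := by
    intro n
    haveI : ENNReal.HolderTriple (ENNReal.ofReal p) (ENNReal.ofReal q) 1 :=
      ⟨by simpa [one_div] using hpqr.symm⟩
    have := ((hGLp n).smul (φ := fun ω => ‖fn n ω - f ω‖) (r := 1) ((hsubLp n).norm))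
    rw [memLp_one_iff_integrable] at this
    exact this
  -- Hölder
  have holder : ∀ n, ∫ ω, ‖fn n ω - f ω‖ * (1 + ‖fn n ω‖ ^ (p - 1) + ‖f ω‖ ^ (p - 1)) ∂μ ≤
      (∫ ω, ‖fn n ω - f ω‖ ^ p ∂μ) ^ (1/p) *
      (∫ ω, (1 + ‖fn n ω‖ ^ (p - 1) + ‖f ω‖ ^ (p - 1)) ^ q ∂μ) ^ (1/q) := by
    intro n
    refine integral_mul_le_Lp_mul_Lq_of_nonneg hpq (ae_of_all _ fun ω => norm_nonneg _)
      (ae_of_all _ fun ω => by positivity) ((hsubLp n).norm) (hGLp n)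
  -- integrability of G^q
  have hGqInt : ∀ n, Integrable
      (fun ω => (1 + ‖fn n ω‖ ^ (p - 1) + ‖f ω‖ ^ (p - 1)) ^ q) μ := by
    intro n
    have h0 : ENNReal.ofReal q ≠ 0 := by
      simp only [ne_eq, ENNReal.ofReal_eq_zero, not_le]; exact hq0
    have := (hGLp n).integrable_norm_rpow h0 ENNReal.ofReal_ne_top
    rw [ENNReal.toReal_ofReal hq0.le] at this
    refine this.congr (ae_of_all _ fun ω => ?_)
    exact congrArg (· ^ q) (Real.norm_of_nonneg (by positivity))
  -- pointwise bound on G^q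
  have hGq_le : ∀ n ω, (1 + ‖fn n ω‖ ^ (p - 1) + ‖f ω‖ ^ (p - 1)) ^ q ≤
      4 ^ q * (1 + ‖fn n ω‖ ^ p + ‖f ω‖ ^ p) := by
    intro n ω
    set a := ‖fn n ω‖ ^ (p - 1) with ha_def
    set b := ‖f ω‖ ^ (p - 1) with hb_def
    have ha : 0 ≤ a := Real.rpow_nonneg (norm_nonneg _) _
    have hb : 0 ≤ b := Real.rpow_nonneg (norm_nonneg _) _
    have haq : a ^ q = ‖fn n ω‖ ^ p := by
      rw [ha_def, ← Real.rpow_mul (norm_nonneg _), hpq.sub_one_mul_conj]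
    have hbq : b ^ q = ‖f ω‖ ^ p := by
      rw [hb_def, ← Real.rpow_mul (norm_nonneg _), hpq.sub_one_mul_conj]
    have h2 : (1 + (a + b)) ^ q ≤ 2 ^ q * ((1:ℝ) ^ q + (a + b) ^ q) :=
      aux_rpow_add_le (by norm_num) (by positivity) hq0.le
    have h3 : (a + b) ^ q ≤ 2 ^ q * (a ^ q + b ^ q) := aux_rpow_add_le ha hb hq0.le
    have h2q4 : (2:ℝ) ^ q ≤ 4 ^ q := Real.rpow_le_rpow (by norm_num) (by norm_num) hq0.le
    have h2pos : (0:ℝ) < 2 ^ q := Real.rpow_pos_of_pos (by norm_num) _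
    have h4 : (2:ℝ) ^ q * 2 ^ q = 4 ^ q := by
      rw [← Real.mul_rpow (by norm_num) (by norm_num)]; norm_num
    have hone : (1:ℝ) ^ q = 1 := Real.one_rpow q
    have haqn : 0 ≤ a ^ q + b ^ q := by positivity
    have hassoc : 1 + a + b = 1 + (a + b) := by ring
    rw [hassoc, ← haq, ← hbq]
    nlinarith [mul_le_mul_of_nonneg_left h3 h2pos.le]
  -- uniform bound M on ∫ ‖fn - f‖^p
  obtain ⟨M, hM⟩ : ∃ M, ∀ n, ∫ ω, ‖fn n ω - f ω‖ ^ p ∂μ ≤ M := by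
    obtain ⟨M, hM⟩ := hconv.bddAbove_range
    exact ⟨M, fun n => hM (Set.mem_range_self n)⟩
  -- uniform bound on ∫ ‖fn‖^p
  have hfn_bound : ∀ n, ∫ ω, ‖fn n ω‖ ^ p ∂μ ≤ 2 ^ p * (M + ∫ ω, ‖f ω‖ ^ p ∂μ) := by
    intro n
    have step : ∫ ω, ‖fn n ω‖ ^ p ∂μ ≤
        ∫ ω, 2 ^ p * (‖fn n ω - f ω‖ ^ p + ‖f ω‖ ^ p) ∂μ := by
      refine integral_mono (hfnp n) (((hsubInt n).add hfp).const_mul _) (fun ω => ?_)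
      calc ‖fn n ω‖ ^ p ≤ (‖fn n ω - f ω‖ + ‖f ω‖) ^ p :=
            Real.rpow_le_rpow (norm_nonneg _)
              (by simpa using norm_add_le (fn n ω - f ω) (f ω)) hp0.le
        _ ≤ 2 ^ p * (‖fn n ω - f ω‖ ^ p + ‖f ω‖ ^ p) :=
            aux_rpow_add_le (norm_nonneg _) (norm_nonneg _) hp0.le
    rw [integral_const_mul, integral_add (hsubInt n) hfp] at step
    have h2p : (0:ℝ) ≤ 2 ^ p := (Real.rpow_pos_of_pos (by norm_num) _).le
    nlinarith [hM n]
  -- bound on ∫ G^q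
  set If : ℝ := ∫ ω, ‖f ω‖ ^ p ∂μ with hIf_def
  set B : ℝ := 4 ^ q * ((μ Set.univ).toReal + (2 ^ p * (M + If) + If)) with hB_def
  have hB : ∀ n, ∫ ω, (1 + ‖fn n ω‖ ^ (p - 1) + ‖f ω‖ ^ (p - 1)) ^ q ∂μ ≤ B := by
    intro n
    have step1 : ∫ ω, (1 + ‖fn n ω‖ ^ (p - 1) + ‖f ω‖ ^ (p - 1)) ^ q ∂μ ≤
        ∫ ω, 4 ^ q * (1 + ‖fn n ω‖ ^ p + ‖f ω‖ ^ p) ∂μ :=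
      integral_mono (hGqInt n) ((((integrable_const 1).add (hfnp n)).add hfp).const_mul _)
        (fun ω => hGq_le n ω)
    have hint1 : Integrable (fun ω => 1 + ‖fn n ω‖ ^ p) μ := (integrable_const 1).add (hfnp n)
    rw [integral_const_mul, integral_add hint1 hfp,
      integral_add (integrable_const 1) (hfnp n), integral_const, smul_eq_mul, mul_one] at step1
    have h4q : (0:ℝ) ≤ 4 ^ q := (Real.rpow_pos_of_pos (by norm_num) _).le
    have := hfn_bound n
    rw [hB_def, ← measureReal_def]
    nlinarith [this]
  -- integrability of W ∘ f, W ∘ fn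
  have hWf : Integrable (fun ω => W (f ω)) μ := hWint f hf hfp
  have hWfn : ∀ n, Integrable (fun ω => W (fn n ω)) μ := fun n => hWint (fn n) (hfn n) (hfnp n)
  have hIfn_nonneg : ∀ n, (0:ℝ) ≤ ∫ ω, ‖fn n ω - f ω‖ ^ p ∂μ := fun n =>
    integral_nonneg (fun ω => by positivity)
  have hB_nonneg : (0:ℝ) ≤ B := le_trans (integral_nonneg (fun ω => by positivity)) (hB 0)
  -- the key estimate
  have key : ∀ n, |(∫ ω, W (fn n ω) ∂μ) - ∫ ω, W (f ω) ∂μ| ≤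
      L * ((∫ ω, ‖fn n ω - f ω‖ ^ p ∂μ) ^ (1/p) * B ^ (1/q)) := by
    intro n
    rw [← integral_sub (hWfn n) hWf]
    calc |∫ ω, (W (fn n ω) - W (f ω)) ∂μ| ≤ ∫ ω, |W (fn n ω) - W (f ω)| ∂μ := by
          simpa [Real.norm_eq_abs] using
            norm_integral_le_integral_norm (fun ω => W (fn n ω) - W (f ω)) (μ := μ)
      _ ≤ ∫ ω, L * (‖fn n ω - f ω‖ * (1 + ‖fn n ω‖ ^ (p - 1) + ‖f ω‖ ^ (p - 1))) ∂μ := by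
          refine integral_mono_of_nonneg (ae_of_all _ fun ω => abs_nonneg _)
            ((hGH n).const_mul L) (ae_of_all _ fun ω => ?_)
          calc |W (fn n ω) - W (f ω)| ≤
              L * (1 + ‖fn n ω‖ ^ (p - 1) + ‖f ω‖ ^ (p - 1)) * ‖fn n ω - f ω‖ := hW _ _
            _ = L * (‖fn n ω - f ω‖ * (1 + ‖fn n ω‖ ^ (p - 1) + ‖f ω‖ ^ (p - 1))) := by ring
      _ = L * ∫ ω, ‖fn n ω - f ω‖ * (1 + ‖fn n ω‖ ^ (p - 1) + ‖f ω‖ ^ (p - 1)) ∂μ :=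
          integral_const_mul _ _
      _ ≤ L * ((∫ ω, ‖fn n ω - f ω‖ ^ p ∂μ) ^ (1/p) *
          (∫ ω, (1 + ‖fn n ω‖ ^ (p - 1) + ‖f ω‖ ^ (p - 1)) ^ q ∂μ) ^ (1/q)) :=
          mul_le_mul_of_nonneg_left (holder n) hL
      _ ≤ L * ((∫ ω, ‖fn n ω - f ω‖ ^ p ∂μ) ^ (1/p) * B ^ (1/q)) := by
          refine mul_le_mul_of_nonneg_left ?_ hL
          refine mul_le_mul_of_nonneg_left ?_ (Real.rpow_nonneg (hIfn_nonneg n) _)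
          exact Real.rpow_le_rpow (integral_nonneg (fun ω => by positivity)) (hB n)
            (by positivity)
  -- conclusion
  have hRHS : Tendsto (fun n => L * ((∫ ω, ‖fn n ω - f ω‖ ^ p ∂μ) ^ (1/p) * B ^ (1/q)))
      atTop (nhds 0) := by
    have h1 : Tendsto (fun n => (∫ ω, ‖fn n ω - f ω‖ ^ p ∂μ) ^ (1/p)) atTop (nhds 0) := by
      have := hconv.rpow_const (p := 1/p) (Or.inr (by positivity))
      rwa [Real.zero_rpow (by positivity : (1:ℝ)/p ≠ 0)] at this
    simpa using (h1.mul_const (B ^ (1/q))).const_mul L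
  rw [tendsto_iff_dist_tendsto_zero]
  refine squeeze_zero (fun n => dist_nonneg) (fun n => ?_) hRHS
  rw [Real.dist_eq]
  exact key n
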